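/- The digraph Q = TT_3[{u}, \overline{K}_{n-2}, {v}] (obtained from the transitive tournament on three vertices a→b, b→c, a→c by substituting the single vertex u for a, an independent set of n−2 ≥ 1 vertices for b, and the single vertex v for c) has no good (u,v)-pair. The same holds if the arc vu is added. -/
import Mathlib


/-- Two arc sets (relations) are arc-disjoint. -/
def ArcDisjoint {V : Type*} (B₁ B₂ : V → V → Prop) : Prop := ∀ x y, ¬ (B₁ x y ∧ B₂ x y)

/-- `B` is (the arc set of) an out-branching of the digraph with arc relation `A`,
rooted at `u`: a spanning oriented tree in which every vertex except `u` has
in-degree one and every vertex is reachable from `u`. -/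
def IsOutBranching {V : Type*} (A B : V → V → Prop) (u : V) : Prop :=
  (∀ x y, B x y → A x y) ∧ (∀ w, w ≠ u → ∃! x, B x w) ∧ (∀ x, ¬ B x u) ∧
    (∀ w, Relation.ReflTransGen B u w)

/-- `B` is an in-branching of `A` rooted at `v`. -/
def IsInBranching {V : Type*} (A B : V → V → Prop) (v : V) : Prop :=
  (∀ x y, B x y → A x y) ∧ (∀ w, w ≠ v → ∃! y, B w y) ∧ (∀ y, ¬ B v y) ∧
    (∀ w, Relation.ReflTransGen B w v)

/-- A good `(u,v)`-pair: an arc-disjoint pair of an out-branching rooted at `u`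
and an in-branching rooted at `v`. -/
def GoodPair {V : Type*} (A : V → V → Prop) (u v : V) : Prop :=
  ∃ B₁ B₂, IsOutBranching A B₁ u ∧ IsInBranching A B₂ v ∧ ArcDisjoint B₁ B₂

/-- A digraph is strong if every vertex can reach every other vertex. -/
def IsStrong {V : Type*} (A : V → V → Prop) : Prop := ∀ x y, Relation.ReflTransGen A x y

/-- `k`-arc-strong: removing any set of fewer than `k` arcs leaves a strong digraph. -/
def IsKArcStrong {V : Type*} (A : V → V → Prop) (k : ℕ) : Prop :=
  ∀ F : Set (V × V), F.Finite → F.ncard < k →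
    IsStrong fun x y => A x y ∧ (x, y) ∉ F

/-- The composition `D[H₁,…,Hₙ]` of a digraph `D` on index type `ι` with digraphs
`H i` on types `β i`: vertices are `Σ i, β i`; arcs are the internal arcs of each
`H i` together with all arcs from `β i` to `β j` whenever `D i j` and `i ≠ j`. -/
def Comp {ι : Type*} {β : ι → Type*} (D : ι → ι → Prop) (H : ∀ i, β i → β i → Prop) :
    (Σ i, β i) → (Σ i, β i) → Prop :=
  fun x y => (∃ h : y.1 = x.1, H x.1 x.2 (h ▸ y.2)) ∨ (x.1 ≠ y.1 ∧ D x.1 y.1)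

/-- `TT₃[{u}, K̄ₘ, {v}]`, together with the arc `v → u` iff `c` holds. -/
def Q7 (m : ℕ) (c : Prop) : (Unit ⊕ Fin m ⊕ Unit) → (Unit ⊕ Fin m ⊕ Unit) → Prop
  | Sum.inl _, Sum.inr _ => True
  | Sum.inr (Sum.inl _), Sum.inr (Sum.inr _) => True
  | Sum.inr (Sum.inr _), Sum.inl _ => c
  | _, _ => False

/-- `TT₃[{u}, K̄_{n-2}, {v}]` (with or without the extra arc `vu`) has no good
`(u,v)`-pair. -/
theorem stmt_7 (m : ℕ) (hm : 1 ≤ m) (c : Prop) :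
    ¬ GoodPair (Q7 m c) (Sum.inl ()) (Sum.inr (Sum.inr ())) := by
  rintro ⟨B₁, B₂, ⟨hA1, hin1, hu1, hr1⟩, ⟨hA2, hout2, hv2, hr2⟩, hd⟩
  have h1 : ∀ i : Fin m, B₁ (Sum.inl ()) (Sum.inr (Sum.inl i)) := by
    intro i
    obtain ⟨x, hx, -⟩ := hin1 (Sum.inr (Sum.inl i)) (by simp)
    have h := hA1 _ _ hx
    match x with
    | Sum.inl () => exact hx
    | Sum.inr (Sum.inl j) => exact absurd h (by simp [Q7])
    | Sum.inr (Sum.inr ()) => exact absurd h (by simp [Q7])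
  have h2 : ∀ i : Fin m, B₂ (Sum.inr (Sum.inl i)) (Sum.inr (Sum.inr ())) := by
    intro i
    obtain ⟨y, hy, -⟩ := hout2 (Sum.inr (Sum.inl i)) (by simp)
    have h := hA2 _ _ hy
    match y with
    | Sum.inr (Sum.inr ()) => exact hy
    | Sum.inl () => exact absurd h (by simp [Q7])
    | Sum.inr (Sum.inl j) => exact absurd h (by simp [Q7])
  have h3 : B₂ (Sum.inl ()) (Sum.inr (Sum.inr ())) := by
    obtain ⟨y, hy, -⟩ := hout2 (Sum.inl ()) (by simp)
    have h := hA2 _ _ hy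
    match y with
    | Sum.inr (Sum.inr ()) => exact hy
    | Sum.inl () => exact absurd h (by simp [Q7])
    | Sum.inr (Sum.inl j) => exact absurd (And.intro (h1 j) hy) (hd _ _)
  obtain ⟨x, hx, -⟩ := hin1 (Sum.inr (Sum.inr ())) (by simp)
  have h := hA1 _ _ hx
  match x with
  | Sum.inl () => exact hd _ _ ⟨hx, h3⟩
  | Sum.inr (Sum.inl j) => exact hd _ _ ⟨hx, h2 j⟩
  | Sum.inr (Sum.inr ()) => exact absurd h (by simp [Q7])
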